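/- Let D be an n×n symmetric matrix with zero diagonal, and let J = I - (1/n)ee^T be the orthogonal projection onto the orthogonal complement of the all-ones vector e. Then D is a Euclidean distance matrix (i.e., there exist points p^1,...,p^n in some R^k with D_ij = ||p^i - p^j||^2) with embedding dimension r if and only if -½ J D J is positive semidefinite of rank r. -/

import Mathlib

open Matrix BigOperators Finset

lemma JDJ_entry {n : ℕ} (D : Matrix (Fin n) (Fin n) ℝ)
    (J : Matrix (Fin n) (Fin n) ℝ)
    (hJ : J = 1 - (n : ℝ)⁻¹ • Matrix.of (fun _ _ => (1 : ℝ))) (i j : Fin n) :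
    (J * D * J) i j = D i j - (n:ℝ)⁻¹ * (∑ k, D i k) - (n:ℝ)⁻¹ * (∑ k, D k j)
      + (n:ℝ)⁻¹ * (n:ℝ)⁻¹ * (∑ k, ∑ l, D k l) := by
  set c : ℝ := (n:ℝ)⁻¹ with hc
  set E : Matrix (Fin n) (Fin n) ℝ := Matrix.of (fun _ _ => (1:ℝ)) with hE
  have h1 : ∀ i k, ((1 - c • E) * D) i k = D i k - c * ∑ m, D m k := by
    intro i k
    simp [hE, Matrix.mul_apply, Matrix.sub_apply, Matrix.smul_apply, Matrix.one_apply,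
      sub_mul, ite_mul, Finset.sum_sub_distrib, Finset.mul_sum]
  have h2 : ∀ (A : Matrix (Fin n) (Fin n) ℝ) i j, (A * (1 - c • E)) i j
      = A i j - c * ∑ k, A i k := by
    intro A i j
    rw [Matrix.mul_apply]
    simp only [hE, Matrix.sub_apply, Matrix.smul_apply, Matrix.one_apply, Matrix.of_apply,
      smul_eq_mul, mul_one, mul_sub, mul_ite, mul_zero, Finset.sum_sub_distrib,
      Finset.sum_ite_eq', Finset.mem_univ, if_true]
    rw [← Finset.sum_mul]
    ring
  have h3 : ∑ k, ((1 - c • E) * D) i k = (∑ k, D i k) - c * ∑ k, ∑ m, D m k := by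
    rw [Finset.sum_congr rfl fun k _ => h1 i k, Finset.sum_sub_distrib, ← Finset.mul_sum]
  rw [hJ, h2, h1, h3, Finset.sum_comm]
  ring

lemma vectorSpan_eq_span_centered {V : Type*} [NormedAddCommGroup V] [InnerProductSpace ℝ V]
    {n : ℕ} (hn : 0 < n) (p : Fin n → V) :
    vectorSpan ℝ (Set.range p)
      = Submodule.span ℝ (Set.range fun i => p i - (n:ℝ)⁻¹ • ∑ j, p j) := by
  have hn' : (n : ℝ) ≠ 0 := Nat.cast_ne_zero.2 hn.ne'
  apply le_antisymm
  · rw [vectorSpan_def]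
    apply Submodule.span_le.2
    rintro x ⟨a, ⟨i, rfl⟩, b, ⟨j, rfl⟩, rfl⟩
    have hx : p i -ᵥ p j = (p i - (n:ℝ)⁻¹ • ∑ m, p m) - (p j - (n:ℝ)⁻¹ • ∑ m, p m) := by
      simp [vsub_eq_sub]
    show p i -ᵥ p j ∈ _
    rw [hx]
    exact sub_mem (Submodule.subset_span ⟨i, rfl⟩) (Submodule.subset_span ⟨j, rfl⟩)
  · apply Submodule.span_le.2
    rintro x ⟨i, rfl⟩
    have hx : p i - (n:ℝ)⁻¹ • ∑ j, p j = (n:ℝ)⁻¹ • ∑ j, (p i - p j) := by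
      rw [Finset.sum_sub_distrib, smul_sub, Finset.sum_const, Finset.card_univ,
        Fintype.card_fin, ← Nat.cast_smul_eq_nsmul ℝ, smul_smul, inv_mul_cancel₀ hn', one_smul]
    show p i - (n:ℝ)⁻¹ • ∑ j, p j ∈ _
    rw [hx]
    exact Submodule.smul_mem _ _ (Submodule.sum_mem _ fun j _ =>
      vsub_mem_vectorSpan ℝ ⟨i, rfl⟩ ⟨j, rfl⟩)

lemma gram_psd_rank {n k : ℕ} (w : Fin n → EuclideanSpace ℝ (Fin k)) :
    (Matrix.of fun i j => (inner ℝ (w i) (w j) : ℝ)).PosSemidef ∧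
    (Matrix.of fun i j => (inner ℝ (w i) (w j) : ℝ)).rank
      = Module.finrank ℝ (Submodule.span ℝ (Set.range w)) := by
  set B : Matrix (Fin k) (Fin n) ℝ := Matrix.of fun a i => w i a with hB
  have hG : (Matrix.of fun i j => (inner ℝ (w i) (w j) : ℝ)) = Bᵀ * B := by
    ext i j
    simp [Matrix.mul_apply, hB, PiLp.inner_apply, RCLike.inner_apply, starRingEnd_apply,
      star_trivial]
    exact Finset.sum_congr rfl fun _ _ => mul_comm _ _
  have hCT : Bᴴ = Bᵀ := by
    ext a i; simp [Matrix.conjTranspose_apply, star_trivial]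
  constructor
  · rw [hG, ← hCT]
    exact Matrix.posSemidef_conjTranspose_mul_self B
  · rw [hG, Matrix.rank_transpose_mul_self, Matrix.rank_eq_finrank_span_cols]
    have hmap : (Submodule.span ℝ (Set.range w)).map
        (WithLp.linearEquiv 2 ℝ (Fin k → ℝ) : EuclideanSpace ℝ (Fin k) →ₗ[ℝ] (Fin k → ℝ))
        = Submodule.span ℝ (Set.range B.col) := by
      rw [Submodule.map_span]
      congr 1
      ext x
      constructor
      · rintro ⟨y, ⟨i, rfl⟩, rfl⟩; exact ⟨i, rfl⟩
      · rintro ⟨i, rfl⟩; exact ⟨w i, ⟨i, rfl⟩, rfl⟩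
    rw [← hmap, LinearEquiv.finrank_map_eq]

lemma M_entry_sub {n : ℕ} (hn : 0 < n) (D : Matrix (Fin n) (Fin n) ℝ)
    (hsym : D.IsSymm) (hdiag : ∀ i, D i i = 0)
    (J : Matrix (Fin n) (Fin n) ℝ)
    (hJ : J = 1 - (n : ℝ)⁻¹ • Matrix.of (fun _ _ => (1 : ℝ))) (i j : Fin n) :
    (((-(1/2) : ℝ) • (J * D * J)) i i + ((-(1/2) : ℝ) • (J * D * J)) j j
      - 2 * ((-(1/2) : ℝ) • (J * D * J)) i j) = D i j := by
  have hcol : ∀ a : Fin n, ∑ k, D k a = ∑ k, D a k :=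
    fun a => Finset.sum_congr rfl fun k _ => hsym.apply a k
  simp only [Matrix.smul_apply, smul_eq_mul, JDJ_entry D J hJ, hcol, hdiag]
  ring

theorem stmt0 (n r : ℕ) (hn : 0 < n) (D : Matrix (Fin n) (Fin n) ℝ)
    (hsym : D.IsSymm) (hdiag : ∀ i, D i i = 0)
    (J : Matrix (Fin n) (Fin n) ℝ)
    (hJ : J = 1 - (n : ℝ)⁻¹ • Matrix.of (fun _ _ => (1 : ℝ))) :
    (∃ (k : ℕ) (p : Fin n → EuclideanSpace ℝ (Fin k)),
        (∀ i j, D i j = dist (p i) (p j) ^ 2) ∧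
        Module.finrank ℝ (vectorSpan ℝ (Set.range p)) = r) ↔
      (((-(1/2) : ℝ) • (J * D * J)).PosSemidef ∧
        ((-(1/2) : ℝ) • (J * D * J)).rank = r) := by
  have hn' : (n : ℝ) ≠ 0 := Nat.cast_ne_zero.2 hn.ne'
  constructor
  · rintro ⟨k, p, hD, hrank⟩
    set T : EuclideanSpace ℝ (Fin k) := ∑ m, p m with hT
    set q : Fin n → EuclideanSpace ℝ (Fin k) := fun i => p i - (n:ℝ)⁻¹ • T with hq
    set S : ℝ := ∑ m, ‖p m‖^2 with hS
    have hDg : ∀ a b, D a b = ‖p a‖^2 - 2 * inner ℝ (p a) (p b) + ‖p b‖^2 := by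
      intro a b; rw [hD a b, dist_eq_norm]; exact norm_sub_sq_real _ _
    have hrow : ∀ a, ∑ m, D a m = n * ‖p a‖^2 - 2 * inner ℝ (p a) T + S := by
      intro a
      rw [Finset.sum_congr rfl fun m _ => hDg a m, Finset.sum_add_distrib,
        Finset.sum_sub_distrib, Finset.sum_const, Finset.card_univ, Fintype.card_fin,
        ← Finset.mul_sum, hT, inner_sum, nsmul_eq_mul, hS]
    have hcol : ∀ b, ∑ m, D m b = n * ‖p b‖^2 - 2 * inner ℝ T (p b) + S := by
      intro b
      rw [Finset.sum_congr rfl fun m _ => hDg m b, Finset.sum_add_distrib,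
        Finset.sum_sub_distrib, Finset.sum_const, Finset.card_univ, Fintype.card_fin,
        ← Finset.mul_sum, hT, sum_inner, nsmul_eq_mul, hS]
      ring
    have hsum_inner : (∑ a, (inner ℝ (p a) T : ℝ)) = inner ℝ T T := by
      rw [← sum_inner, ← hT]
    have htot : ∑ a, ∑ b, D a b = 2 * n * S - 2 * inner ℝ T T := by
      rw [Finset.sum_congr rfl fun a _ => hrow a, Finset.sum_add_distrib,
        Finset.sum_sub_distrib, ← Finset.mul_sum, ← Finset.mul_sum, hsum_inner,
        Finset.sum_const, Finset.card_univ, Fintype.card_fin, nsmul_eq_mul, ← hS]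
      ring
    have hqg : ∀ i j, (inner ℝ (q i) (q j) : ℝ) = inner ℝ (p i) (p j)
        - (n:ℝ)⁻¹ * inner ℝ (p i) T - (n:ℝ)⁻¹ * inner ℝ T (p j)
        + (n:ℝ)⁻¹ * (n:ℝ)⁻¹ * inner ℝ T T := by
      intro i j
      simp only [hq, inner_sub_left, inner_sub_right, real_inner_smul_left,
        real_inner_smul_right]
      ring
    have hMq : ((-(1/2) : ℝ) • (J * D * J))
        = Matrix.of fun i j => (inner ℝ (q i) (q j) : ℝ) := by
      ext i j
      rw [Matrix.smul_apply, smul_eq_mul, JDJ_entry D J hJ, Matrix.of_apply, hqg,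
        hDg i j, hrow i, hcol j, htot]
      field_simp
      ring
    refine ⟨?_, ?_⟩
    · rw [hMq]; exact (gram_psd_rank q).1
    · rw [hMq, (gram_psd_rank q).2, ← hrank, vectorSpan_eq_span_centered hn p]
  · rintro ⟨hpsd, hrank⟩
    obtain ⟨B, hB⟩ : ∃ B : Matrix (Fin n) (Fin n) ℝ, ((-(1/2) : ℝ) • (J * D * J)) = Bᴴ * B := by
      open scoped MatrixOrder in exact CStarAlgebra.nonneg_iff_eq_star_mul_self.mp hpsd.nonneg
    set p : Fin n → EuclideanSpace ℝ (Fin n) :=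
      fun i => (WithLp.equiv 2 (Fin n → ℝ)).symm (fun a => B a i) with hp
    have hgram : ∀ i j, (inner ℝ (p i) (p j) : ℝ) = ((-(1/2) : ℝ) • (J * D * J)) i j := by
      intro i j
      rw [hB]
      simp [hp, PiLp.inner_apply, Matrix.mul_apply, Matrix.conjTranspose_apply,
        RCLike.inner_apply, starRingEnd_apply, star_trivial]
      exact Finset.sum_congr rfl fun _ _ => mul_comm _ _
    have hdist : ∀ i j, D i j = dist (p i) (p j) ^ 2 := by
      intro i j
      rw [dist_eq_norm, norm_sub_sq_real, ← real_inner_self_eq_norm_sq,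
        ← real_inner_self_eq_norm_sq, hgram i i, hgram j j, hgram i j,
        ← M_entry_sub hn D hsym hdiag J hJ i j]
      ring
    have hJe : J *ᵥ (fun _ => (1:ℝ)) = 0 := by
      funext a
      simp only [hJ, Matrix.mulVec, dotProduct, Matrix.sub_apply, Matrix.one_apply,
        Matrix.smul_apply, Matrix.of_apply, smul_eq_mul, mul_one, sub_mul,
        Finset.sum_sub_distrib, Finset.sum_ite_eq', Finset.sum_ite_eq, Finset.mem_univ, if_true, ite_mul,
        one_mul, zero_mul, Finset.sum_const, Finset.card_univ, Fintype.card_fin,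
        nsmul_eq_mul, Pi.zero_apply]
      field_simp
      exact sub_self _
    have hMe : ((-(1/2) : ℝ) • (J * D * J)) *ᵥ (fun _ => (1:ℝ)) = 0 := by
      rw [Matrix.smul_mulVec, ← Matrix.mulVec_mulVec, hJe,
        Matrix.mulVec_zero, smul_zero]
    have hBe : B *ᵥ (fun _ => (1:ℝ)) = 0 := by
      have h0 : (B *ᵥ (fun _ => (1:ℝ))) ⬝ᵥ (B *ᵥ (fun _ => (1:ℝ))) = 0 := by
        have h1 : (fun _ => (1:ℝ)) ⬝ᵥ (((-(1/2) : ℝ) • (J * D * J)) *ᵥ (fun _ => (1:ℝ))) = 0 := by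
          rw [hMe]; simp
        rw [hB, ← Matrix.mulVec_mulVec, dotProduct_mulVec,
          Matrix.vecMul_conjTranspose] at h1
        simpa [star_trivial] using h1
      exact (dotProduct_self_eq_zero).mp h0
    have hsum : ∑ i, p i = 0 := by
      apply (WithLp.linearEquiv 2 ℝ (Fin n → ℝ)).injective
      rw [map_sum, map_zero]
      funext a
      have := congrFun hBe a
      simpa [hp, Matrix.mulVec, dotProduct] using this
    have hvs : vectorSpan ℝ (Set.range p) = Submodule.span ℝ (Set.range p) := by
      rw [vectorSpan_eq_span_centered hn p]
      congr 1
      have : (fun i => p i - (n:ℝ)⁻¹ • ∑ j, p j) = p := by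
        funext i; rw [hsum, smul_zero, sub_zero]
      rw [this]
    have hofM : (Matrix.of fun i j => (inner ℝ (p i) (p j) : ℝ))
        = ((-(1/2) : ℝ) • (J * D * J)) := by
      ext i j; exact hgram i j
    refine ⟨n, p, hdist, ?_⟩
    rw [hvs, ← (gram_psd_rank p).2, hofM, hrank]
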